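/- Let f = (f₁, f₂) : ℂ → ℂ² be a proper holomorphic map such that for every z ∈ ℂ, min(|f₁(z)|, |f₂(z)|) < 1. Then one of the functions f₁, f₂ is a constant of modulus less than 1 (and the other is a nonconstant polynomial). -/

import Mathlib

open Filter Metric Complex

/-- An entire function with polynomial growth is a polynomial. -/
lemma poly_of_growth (f : ℂ → ℂ) (hf : Differentiable ℂ f) (n : ℕ) (C : ℝ)
    (hb : ∀ z : ℂ, ‖f z‖ ≤ C * max 1 ‖z‖ ^ n) :
    ∃ p : Polynomial ℂ, ∀ z, f z = p.eval z := by
  have hC : 0 ≤ C := by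
    have := hb 0
    simp at this
    exact (norm_nonneg (f 0)).trans this
  set P := cauchyPowerSeries f 0 1 with hP
  have H : HasFPowerSeriesOnBall f P 0 ⊤ := hf.hasFPowerSeriesOnBall 0 (R := 1) one_pos
  -- coefficients beyond n vanish
  have hcoeff : ∀ k : ℕ, n < k → P k = 0 := by
    intro k hk
    have key : ∀ m : ℕ, ‖P k‖ ≤ C / (m + 1 : ℝ) := by
      intro m
      set R : NNReal := (m : NNReal) + 1 with hR
      have hR1 : (1:ℝ) ≤ (R : ℝ) := by
        simp [hR]
      have hRpos : (0:ℝ) < R := lt_of_lt_of_le one_pos hR1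
      have HR : HasFPowerSeriesOnBall f (cauchyPowerSeries f 0 R) 0 ⊤ :=
        hf.hasFPowerSeriesOnBall 0 (by positivity)
      have hPe : P = cauchyPowerSeries f 0 R :=
        H.hasFPowerSeriesAt.eq_formalMultilinearSeries HR.hasFPowerSeriesAt
      have hint : (∫ θ : ℝ in (0)..2 * Real.pi, ‖f (circleMap 0 R θ)‖)
          ≤ 2 * Real.pi * (C * (R:ℝ) ^ n) := by
        have hle : ∀ θ ∈ Set.Icc (0:ℝ) (2 * Real.pi),
            ‖f (circleMap 0 R θ)‖ ≤ C * (R:ℝ) ^ n := by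
          intro θ _
          have h := hb (circleMap 0 R θ)
          have hcm : ‖circleMap 0 (R:ℝ) θ‖ = (R:ℝ) := by
            rw [norm_circleMap_zero, _root_.abs_of_nonneg hRpos.le]
          rwa [hcm, max_eq_right hR1] at h
        calc (∫ θ : ℝ in (0)..2 * Real.pi, ‖f (circleMap 0 R θ)‖)
            ≤ ∫ _ : ℝ in (0)..2 * Real.pi, C * (R:ℝ) ^ n := by
              apply intervalIntegral.integral_mono_on Real.two_pi_pos.le
              · exact ((hf.continuous.comp (continuous_circleMap 0 R)).norm).intervalIntegrable _ _
              · exact intervalIntegrable_const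
              · exact hle
          _ = 2 * Real.pi * (C * (R:ℝ) ^ n) := by
              simp; ring
      have h1 : ‖P k‖ ≤ ((2 * Real.pi)⁻¹ * ∫ θ : ℝ in (0)..2 * Real.pi,
          ‖f (circleMap 0 R θ)‖) * |(R:ℝ)|⁻¹ ^ k := by
        rw [hPe]
        exact norm_cauchyPowerSeries_le f 0 R k
      have h2 : ((2 * Real.pi)⁻¹ * ∫ θ : ℝ in (0)..2 * Real.pi,
          ‖f (circleMap 0 R θ)‖) * |(R:ℝ)|⁻¹ ^ k ≤ (C * (R:ℝ) ^ n) * ((R:ℝ)⁻¹) ^ k := by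
        rw [_root_.abs_of_nonneg hRpos.le]
        apply mul_le_mul_of_nonneg_right _ (by positivity)
        rw [inv_mul_le_iff₀ Real.two_pi_pos]
        nlinarith [hint]
      have h3 : (C * (R:ℝ) ^ n) * ((R:ℝ)⁻¹) ^ k ≤ C / R := by
        rw [inv_pow, ← div_eq_mul_inv, div_le_div_iff₀ (by positivity) hRpos]
        calc C * (R:ℝ) ^ n * (R:ℝ) = C * (R:ℝ) ^ (n + 1) := by ring
          _ ≤ C * (R:ℝ) ^ k := by
              apply mul_le_mul_of_nonneg_left _ hC
              exact pow_le_pow_right₀ hR1 hk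
      have : (C : ℝ) / R = C / (m + 1 : ℝ) := by
        norm_num [hR]
      linarith [h1.trans (h2.trans h3)]
    have h0 : ‖P k‖ ≤ 0 := by
      have ht : Tendsto (fun m : ℕ => C / (m + 1 : ℝ)) atTop (nhds 0) := by
        apply Tendsto.div_atTop tendsto_const_nhds
        exact tendsto_atTop_add_const_right _ _ tendsto_natCast_atTop_atTop
      exact ge_of_tendsto ht (Eventually.of_forall key)
    exact norm_le_zero_iff.mp h0
  refine ⟨∑ k ∈ Finset.range (n + 1), Polynomial.C (P.coeff k) * Polynomial.X ^ k, fun z => ?_⟩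
  have hs : HasSum (fun k => P k fun _ => z) (f z) := by
    have := H.hasSum (y := z) (by simp)
    simpa using this
  have hs' : HasSum (fun k => P k fun _ => z)
      (∑ k ∈ Finset.range (n + 1), P k fun _ => z) := by
    apply hasSum_sum_of_ne_finset_zero
    intro k hk
    rw [hcoeff k (by simpa using hk)]
    simp
  rw [hs.unique hs', Polynomial.eval_finset_sum]
  refine Finset.sum_congr rfl fun k _ => ?_
  rw [FormalMultilinearSeries.apply_eq_pow_smul_coeff]
  simp [smul_eq_mul]
  ring


/-- From an eventual property along `cocompact ℂ`, extract a radius. -/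
lemma exists_radius_of_cocompact {p : ℂ → Prop} (h : ∀ᶠ z in cocompact ℂ, p z) :
    ∃ R : ℝ, 1 ≤ R ∧ ∀ z : ℂ, R ≤ ‖z‖ → p z := by
  rw [Filter.Eventually, mem_cocompact] at h
  obtain ⟨K, hK, hKc⟩ := h
  obtain ⟨r, hr⟩ := hK.isBounded.subset_closedBall 0
  refine ⟨max (r + 1) 1, le_max_right _ _, fun z hz => ?_⟩
  apply hKc
  intro hzK
  have := hr hzK
  simp only [mem_closedBall, dist_zero_right] at this
  have : r + 1 ≤ ‖z‖ := le_trans (le_max_left _ _) hz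
  linarith [mem_closedBall_zero_iff.mp (hr hzK)]


/-- An entire function tending to infinity is a polynomial of positive degree. -/
lemma proper_entire_poly (f : ℂ → ℂ) (hf : Differentiable ℂ f)
    (hp : Tendsto (fun z => ‖f z‖) (cocompact ℂ) atTop) :
    ∃ p : Polynomial ℂ, 0 < p.degree ∧ ∀ z, f z = p.eval z := by
  obtain ⟨R₀, hR₀1, hR₀⟩ := exists_radius_of_cocompact (hp.eventually (eventually_ge_atTop 1))
  have hR₀pos : (0:ℝ) < R₀ := lt_of_lt_of_le one_pos hR₀1
  -- the auxiliary function g(w) = 1 / f(1/w), with a removable singularity at 0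
  set g : ℂ → ℂ := fun w => if w = 0 then 0 else (f w⁻¹)⁻¹ with hg_def
  -- facts about small nonzero w
  have hsmall : ∀ w : ℂ, w ≠ 0 → ‖w‖ ≤ R₀⁻¹ → f w⁻¹ ≠ 0 ∧ g w = (f w⁻¹)⁻¹ ∧ g w ≠ 0 := by
    intro w hw hwle
    have h1 : R₀ ≤ ‖w⁻¹‖ := by
      rw [norm_inv]
      rw [le_inv_comm₀ hR₀pos (norm_pos_iff.mpr hw)]
      exact hwle
    have h2 : f w⁻¹ ≠ 0 := by
      intro h
      have := hR₀ _ h1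
      rw [h] at this
      simp at this
      linarith
    exact ⟨h2, by simp [hg_def, hw], by simp [hg_def, hw, h2]⟩
  -- g is differentiable on a punctured neighborhood of 0
  have hgd : ∀ w : ℂ, w ≠ 0 → ‖w‖ ≤ R₀⁻¹ → DifferentiableAt ℂ g w := by
    intro w hw hle
    have : ∀ᶠ u in nhds w, g u = (f u⁻¹)⁻¹ := by
      filter_upwards [isOpen_ne.mem_nhds hw] with u hu
      simp [hg_def, hu]
    apply DifferentiableAt.congr_of_eventuallyEq _ this
    refine DifferentiableAt.inv ?_ (hsmall w hw hle).1
    exact (hf.differentiableAt).comp w (differentiableAt_inv hw)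
  -- inv tends to cocompact
  have hinv : Tendsto (fun w : ℂ => w⁻¹) (nhdsWithin 0 {0}ᶜ) (cocompact ℂ) := by
    rw [← Metric.cobounded_eq_cocompact, ← tendsto_norm_atTop_iff_cobounded]
    have h1 : Tendsto (fun w : ℂ => ‖w‖) (nhdsWithin 0 {0}ᶜ) (nhdsWithin 0 (Set.Ioi 0)) := by
      apply tendsto_nhdsWithin_of_tendsto_nhds_of_eventually_within
      · exact (continuous_norm.tendsto 0).mono_left nhdsWithin_le_nhds |>.congr' (by simp) |>.mono_right (by simp)
      · filter_upwards [self_mem_nhdsWithin] with w hw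
        exact norm_pos_iff.mpr hw
    have h2 : Tendsto (fun r : ℝ => r⁻¹) (nhdsWithin 0 (Set.Ioi 0)) atTop :=
      tendsto_inv_nhdsGT_zero
    have := h2.comp h1
    simpa [Function.comp_def, norm_inv] using this
  -- g tends to 0 at 0
  have hgc : ContinuousAt g 0 := by
    have hg0 : g 0 = 0 := by simp [hg_def]
    have key : Tendsto g (nhdsWithin (0:ℂ) {0}ᶜ ⊔ pure 0) (nhds 0) := by
      rw [tendsto_sup]
      constructor
      · rw [tendsto_zero_iff_norm_tendsto_zero]
        have hft : Tendsto (fun w : ℂ => ‖f w⁻¹‖) (nhdsWithin 0 {0}ᶜ) atTop :=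
          hp.comp hinv
        have := (tendsto_inv_atTop_zero).comp hft
        apply this.congr'
        filter_upwards [self_mem_nhdsWithin] with w hw
        have hw' : w ≠ 0 := hw
        simp [hg_def, hw', Function.comp, map_inv₀]
      · rw [tendsto_pure_left]
        intro s hs
        simpa [hg0] using mem_of_mem_nhds hs
    rw [ContinuousAt, hg0]
    exact key.mono_left (le_of_eq (nhdsNE_sup_pure 0).symm)
  -- g is analytic at 0
  have hga : AnalyticAt ℂ g 0 := by
    apply Complex.analyticAt_of_differentiable_on_punctured_nhds_of_continuousAt _ hgc
    have : ∀ᶠ w in nhdsWithin (0:ℂ) {0}ᶜ, ‖w‖ ≤ R₀⁻¹ := by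
      apply Filter.Eventually.filter_mono nhdsWithin_le_nhds
      have : Metric.closedBall (0:ℂ) R₀⁻¹ ∈ nhds (0:ℂ) :=
        Metric.closedBall_mem_nhds 0 (by positivity)
      filter_upwards [this] with w hw
      simpa [Metric.mem_closedBall, dist_zero_right] using hw
    filter_upwards [this, self_mem_nhdsWithin] with w h1 h2
    exact hgd w h2 h1
  -- g does not vanish identically near 0
  have hord : analyticOrderAt g 0 ≠ ⊤ := by
    intro htop
    have hev := (analyticOrderAt_eq_top).mp htop
    have h1 : ∀ᶠ w in nhdsWithin (0:ℂ) {0}ᶜ, g w = 0 := hev.filter_mono nhdsWithin_le_nhds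
    have h2 : ∀ᶠ w in nhdsWithin (0:ℂ) {0}ᶜ, ‖w‖ ≤ R₀⁻¹ := by
      apply Filter.Eventually.filter_mono nhdsWithin_le_nhds
      filter_upwards [Metric.closedBall_mem_nhds (0:ℂ) (show (0:ℝ) < R₀⁻¹ by positivity)] with w hw
      simpa [Metric.mem_closedBall, dist_zero_right] using hw
    obtain ⟨w, hw1, hw2, hw3⟩ := (h1.and (h2.and self_mem_nhdsWithin)).exists
    exact (hsmall w hw3 hw2).2.2 hw1
  set n : ℕ := (analyticOrderAt g 0).toNat with hn_def
  have hn : analyticOrderAt g 0 = (n : ℕ∞) := (ENat.coe_toNat hord).symm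
  obtain ⟨h, hha, hh0, hhev⟩ := (hga.analyticOrderAt_eq_natCast).mp hn
  -- lower bound for h near 0
  have hhc : ∀ᶠ w in nhds (0:ℂ), ‖h 0‖ / 2 ≤ ‖h w‖ := by
    have := hha.continuousAt.eventually_mem (Metric.ball_mem_nhds (h 0)
      (show (0:ℝ) < ‖h 0‖ / 2 by simpa using norm_pos_iff.mpr hh0))
    filter_upwards [this] with w hw
    have := mem_ball_iff_norm.mp hw
    have h1 := norm_sub_norm_le (h w) (h 0)
    have h2 := (norm_sub_rev (h w) (h 0)) ▸ this
    linarith [norm_sub_norm_le (h 0) (h w)]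
  -- extract a radius δ
  obtain ⟨δ, hδpos, hδ⟩ := Metric.eventually_nhds_iff.mp
    ((hhev.and hhc).and (Metric.eventually_nhds_iff.mpr
      ⟨R₀⁻¹, by positivity, fun {w} hw => le_of_lt (by simpa [dist_zero_right] using hw)⟩))
  -- growth bound for large z
  have hgrow : ∀ z : ℂ, δ⁻¹ < ‖z‖ → ‖f z‖ ≤ 2 / ‖h 0‖ * ‖z‖ ^ n := by
    intro z hz
    have hzpos : (0:ℝ) < ‖z‖ := lt_trans (by positivity) hz
    have hz0 : z ≠ 0 := norm_pos_iff.mp hzpos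
    have hwsmall : dist z⁻¹ (0:ℂ) < δ := by
      rw [dist_zero_right, norm_inv]
      rw [inv_lt_comm₀ hzpos hδpos]
      exact hz
    obtain ⟨⟨hev1, hev2⟩, hev3⟩ := hδ hwsmall
    have hle : ‖z⁻¹‖ ≤ R₀⁻¹ := hev3
    have hz0' : z⁻¹ ≠ 0 := inv_ne_zero hz0
    obtain ⟨hfne, hgw, hgne⟩ := hsmall z⁻¹ hz0' hle
    rw [inv_inv] at hfne hgw
    -- ‖f z‖⁻¹ = ‖z⁻¹‖ ^ n * ‖h z⁻¹‖
    have heq : ‖f z‖⁻¹ = ‖z‖⁻¹ ^ n * ‖h z⁻¹‖ := by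
      have := hev1
      rw [hgw] at this
      have := congrArg norm this
      rw [norm_inv] at this
      rw [this]
      simp [norm_inv]
    have hh0pos : (0:ℝ) < ‖h 0‖ := norm_pos_iff.mpr hh0
    have hlb : ‖h 0‖ / 2 * ‖z‖⁻¹ ^ n ≤ ‖f z‖⁻¹ := by
      rw [heq]
      calc ‖h 0‖ / 2 * ‖z‖⁻¹ ^ n ≤ ‖h z⁻¹‖ * ‖z‖⁻¹ ^ n :=
            mul_le_mul_of_nonneg_right hev2 (by positivity)
        _ = ‖z‖⁻¹ ^ n * ‖h z⁻¹‖ := by ring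
    have hfpos : (0:ℝ) < ‖f z‖ := by
      have hR : R₀ ≤ ‖z‖ := by
        have hle' : ‖z‖⁻¹ ≤ R₀⁻¹ := by rwa [norm_inv] at hle
        exact (inv_le_inv₀ hzpos hR₀pos).mp hle'
      linarith [hR₀ z hR]
    -- from  c * ‖z‖⁻ⁿ ≤ ‖f z‖⁻¹  conclude
    have hc : (0:ℝ) < ‖h 0‖ / 2 * ‖z‖⁻¹ ^ n := by positivity
    rw [le_inv_comm₀ hc hfpos] at hlb
    calc ‖f z‖ ≤ (‖h 0‖ / 2 * ‖z‖⁻¹ ^ n)⁻¹ := hlb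
      _ = 2 / ‖h 0‖ * ‖z‖ ^ n := by
          rw [mul_inv, inv_pow, inv_inv, inv_div]
  -- global polynomial bound
  obtain ⟨M, hM⟩ := (isCompact_closedBall (0:ℂ) (δ⁻¹ + 1)).exists_bound_of_continuousOn
    hf.continuous.continuousOn
  have hM0 : (0:ℝ) ≤ M := le_trans (norm_nonneg (f 0)) (hM 0 (by simp; positivity))
  set Cb : ℝ := max M (2 / ‖h 0‖) with hCb
  have hbound : ∀ z : ℂ, ‖f z‖ ≤ Cb * max 1 ‖z‖ ^ n := by
    intro z
    have hmax1 : (1:ℝ) ≤ max 1 ‖z‖ ^ n := one_le_pow₀ (le_max_left _ _)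
    rcases le_or_gt ‖z‖ (δ⁻¹ + 1) with hle | hlt
    · calc ‖f z‖ ≤ M := hM z (by simpa [Metric.mem_closedBall, dist_zero_right] using hle)
        _ ≤ Cb := le_max_left _ _
        _ ≤ Cb * max 1 ‖z‖ ^ n := le_mul_of_one_le_right (le_trans hM0 (le_max_left _ _)) hmax1
    · have hz1 : (1:ℝ) ≤ ‖z‖ := by
        have : (0:ℝ) < δ⁻¹ := by positivity
        linarith
      have := hgrow z (by linarith)
      calc ‖f z‖ ≤ 2 / ‖h 0‖ * ‖z‖ ^ n := this
        _ ≤ Cb * max 1 ‖z‖ ^ n := by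
            rw [max_eq_right hz1]
            exact mul_le_mul_of_nonneg_right (le_max_right _ _) (by positivity)
  obtain ⟨p, hpev⟩ := poly_of_growth f hf n Cb hbound
  refine ⟨p, ?_, hpev⟩
  by_contra hdeg
  push_neg at hdeg
  have ha := Polynomial.degree_le_zero_iff.mp hdeg
  set a := p.coeff 0 with ha_def
  have hconst : ∀ z, f z = a := by
    intro z
    rw [hpev z, ha]
    simp
  have : ∀ᶠ z in cocompact ℂ, ‖a‖ < ‖f z‖ := hp.eventually (eventually_gt_atTop ‖a‖)
  obtain ⟨z, hz⟩ := this.exists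
  rw [hconst z] at hz
  exact lt_irrefl _ hz



lemma isPreconnected_norm_gt (R : ℝ) (hR : 0 ≤ R) : IsPreconnected {z : ℂ | R < ‖z‖} := by
  have hrank : 1 < Module.rank ℝ ℂ := by
    rw [Complex.rank_real_complex]; norm_num
  have h1 : IsPreconnected ((Set.Ioi R) ×ˢ (sphere (0:ℂ) 1)) :=
    isPreconnected_Ioi.prod (isPreconnected_sphere hrank 0 1)
  have h2 : ContinuousOn (fun p : ℝ × ℂ => p.1 • p.2) ((Set.Ioi R) ×ˢ (sphere (0:ℂ) 1)) :=
    (continuous_fst.smul continuous_snd).continuousOn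
  have himg := h1.image _ h2
  have hset : {z : ℂ | R < ‖z‖} = (fun p : ℝ × ℂ => p.1 • p.2) '' ((Set.Ioi R) ×ˢ (sphere (0:ℂ) 1)) := by
    ext z
    simp only [Set.mem_setOf_eq, Set.mem_image, Set.mem_prod, Set.mem_Ioi,
      mem_sphere_iff_norm, sub_zero, Prod.exists]
    constructor
    · intro hz
      have hzpos : (0:ℝ) < ‖z‖ := lt_of_le_of_lt hR hz
      have hz0 : z ≠ 0 := norm_pos_iff.mp hzpos
      refine ⟨‖z‖, ‖z‖⁻¹ • z, ⟨hz, ?_⟩, ?_⟩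
      · rw [norm_smul, norm_inv, norm_norm, inv_mul_cancel₀ hzpos.ne']
      · rw [smul_smul, mul_inv_cancel₀ hzpos.ne', one_smul]
    · rintro ⟨r, u, ⟨hr, hu⟩, rfl⟩
      rw [norm_smul, hu, mul_one, Real.norm_eq_abs, abs_of_pos (lt_of_le_of_lt hR hr)]
      exact hr
  rw [hset]
  exact himg

lemma main_case (f₁ f₂ : ℂ → ℂ) (h₁ : Differentiable ℂ f₁) (h₂ : Differentiable ℂ f₂)
    (hproper : Tendsto (fun z => ‖((f₁ z, f₂ z) : ℂ × ℂ)‖) (cocompact ℂ) atTop)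
    (R : ℝ) (hsub : ∀ z : ℂ, R < ‖z‖ → ‖f₁ z‖ < 1) :
    ∃ c : ℂ, ‖c‖ < 1 ∧ (∀ z, f₁ z = c) ∧
      ∃ p : Polynomial ℂ, 0 < p.degree ∧ ∀ z, f₂ z = p.eval z := by
  obtain ⟨M, hM⟩ := (isCompact_closedBall (0:ℂ) (R + 1)).exists_bound_of_continuousOn
    h₁.continuous.continuousOn
  have hbd : ∀ z : ℂ, ‖f₁ z‖ ≤ max M 1 := by
    intro z
    rcases le_or_gt ‖z‖ (R + 1) with hle | hlt
    · exact le_trans (hM z (by simpa [Metric.mem_closedBall, dist_zero_right] using hle))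
        (le_max_left _ _)
    · have : R < ‖z‖ := by
        have : R ≤ R + 1 := by linarith
        linarith
      exact le_trans (hsub z this).le (le_max_right _ _)
  obtain ⟨c, hc⟩ := h₁.exists_const_forall_eq_of_bounded
    (isBounded_iff_forall_norm_le.mpr ⟨max M 1, by rintro _ ⟨z, rfl⟩; exact hbd z⟩)
  have hcball : ‖c‖ < 1 := by
    have hz₀ : R < ‖((|R| + 1 : ℝ) : ℂ)‖ := by
      rw [Complex.norm_real, Real.norm_eq_abs]
      rw [abs_of_pos (by positivity : (0:ℝ) < |R| + 1)]
      calc R ≤ |R| := le_abs_self R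
        _ < |R| + 1 := by linarith
    have := hsub _ hz₀
    rw [hc _] at this
    exact this
  have hc1 : ∀ z, ‖f₁ z‖ ≤ 1 := by
    intro z
    rw [hc z]
    exact hcball.le
  have hprop₂ : Tendsto (fun z => ‖f₂ z‖) (cocompact ℂ) atTop := by
    apply tendsto_atTop_mono _ (tendsto_atTop_add_const_right _ (-1) hproper)
    intro z
    have hpn : ‖((f₁ z, f₂ z) : ℂ × ℂ)‖ = max ‖f₁ z‖ ‖f₂ z‖ := rfl
    rw [hpn]
    have h1 : ‖f₁ z‖ ≤ ‖f₂ z‖ + 1 := le_trans (hc1 z) (by linarith [norm_nonneg (f₂ z)])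
    have h2 : ‖f₂ z‖ ≤ ‖f₂ z‖ + 1 := by linarith
    have := max_le h1 h2
    linarith
  obtain ⟨p, hpdeg, hpev⟩ := proper_entire_poly f₂ h₂ hprop₂
  exact ⟨c, hcball, hc, p, hpdeg, hpev⟩

theorem stmt14 (f₁ f₂ : ℂ → ℂ) (h₁ : Differentiable ℂ f₁) (h₂ : Differentiable ℂ f₂)
    (hproper : Filter.Tendsto (fun z => ‖((f₁ z, f₂ z) : ℂ × ℂ)‖)
      (Filter.cocompact ℂ) Filter.atTop)
    (hmin : ∀ z, min (‖f₁ z‖) (‖f₂ z‖) < 1) :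
    (∃ c : ℂ, ‖c‖ < 1 ∧ (∀ z, f₁ z = c) ∧
        ∃ p : Polynomial ℂ, 0 < p.degree ∧ ∀ z, f₂ z = p.eval z) ∨
      (∃ c : ℂ, ‖c‖ < 1 ∧ (∀ z, f₂ z = c) ∧
        ∃ p : Polynomial ℂ, 0 < p.degree ∧ ∀ z, f₁ z = p.eval z) := by
  obtain ⟨R, hR1, hR⟩ := exists_radius_of_cocompact (hproper.eventually (eventually_ge_atTop 3))
  set U₁ : Set ℂ := {z : ℂ | ‖f₁ z‖ < 1} with hU₁def
  set U₂ : Set ℂ := {z : ℂ | ‖f₂ z‖ < 1} with hU₂def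
  have hU₁o : IsOpen U₁ := isOpen_lt h₁.continuous.norm continuous_const
  have hU₂o : IsOpen U₂ := isOpen_lt h₂.continuous.norm continuous_const
  set S : Set ℂ := {z : ℂ | R < ‖z‖} with hSdef
  have hScover : S ⊆ U₁ ∪ U₂ := by
    intro z _
    rcases min_lt_iff.mp (hmin z) with h | h
    · left; rwa [hU₁def, Set.mem_setOf_eq]
    · right; rwa [hU₂def, Set.mem_setOf_eq]
  have hSdisj : ∀ z ∈ S, ¬(z ∈ U₁ ∧ z ∈ U₂) := by
    rintro z hz ⟨hz1, hz2⟩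
    have h3 := hR z (le_of_lt hz)
    have hpn : ‖((f₁ z, f₂ z) : ℂ × ℂ)‖ = max ‖f₁ z‖ ‖f₂ z‖ := rfl
    rw [hpn] at h3
    rw [hU₁def, Set.mem_setOf_eq] at hz1
    rw [hU₂def, Set.mem_setOf_eq] at hz2
    rcases max_cases ‖f₁ z‖ ‖f₂ z‖ with ⟨he, _⟩ | ⟨he, _⟩ <;> rw [he] at h3 <;> linarith
  -- modify U₂ to make them disjoint: use U₂ \ U₁? No: use subset_or_subset with U₁ and U₂ \ closure?
  have hsplit : S ⊆ U₁ ∩ S ∨ S ⊆ U₂ ∩ S := by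
    have hconn := isPreconnected_norm_gt R (by linarith)
    have hdisj : Disjoint (U₁ ∩ S) (U₂ ∩ S) := by
      rw [Set.disjoint_iff]
      rintro z ⟨⟨hz1, hzS⟩, ⟨hz2, _⟩⟩
      exact absurd ⟨hz1, hz2⟩ (hSdisj z hzS)
    have hSopen : IsOpen S := isOpen_lt continuous_const continuous_norm
    have := hconn.subset_or_subset (hU₁o.inter hSopen) (hU₂o.inter hSopen) hdisj
      (fun z hz => by
        rcases hScover hz with h | h
        · exact Or.inl ⟨h, hz⟩
        · exact Or.inr ⟨h, hz⟩)
    exact this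
  rcases hsplit with hsub | hsub
  · left
    exact main_case f₁ f₂ h₁ h₂ hproper R (fun z hz => ((hsub hz).1 : ‖f₁ z‖ < 1))
  · right
    have hproper' : Tendsto (fun z => ‖((f₂ z, f₁ z) : ℂ × ℂ)‖) (cocompact ℂ) atTop := by
      apply hproper.congr
      intro z
      show max ‖f₁ z‖ ‖f₂ z‖ = max ‖f₂ z‖ ‖f₁ z‖
      exact max_comm _ _
    exact main_case f₂ f₁ h₂ h₁ hproper' R (fun z hz => ((hsub hz).1 : ‖f₂ z‖ < 1))
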